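/- Fix an integer N ≥ 1 and let ℂ^{N²} have orthonormal basis |m,n⟩ with m, n ∈ ℤ/Nℤ. Define unitaries U and V by U|m,n⟩ = U_x(m,n)|m+1,n⟩ and V|m,n⟩ = e^{2πi m/N²}|m,n+1⟩, where (for representatives 0 ≤ m,n ≤ N−1) U_x(m,n) = 1 if m ≠ N−1 and U_x(N−1,n) = e^{−2πi n/N}, and all index arithmetic is modulo N. Then the spectrum of U is exactly the set of N²-th roots of unity {e^{2πi j/N²} : j = 0,…,N²−1}, each eigenvalue having multiplicity one; and the same holds for V. -/

import Mathlib

open scoped Matrix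

/-- The transport phase `U_x(m,n)`: equal to `1` unless `m = N-1`, where it equals
`exp(-2πi n/N)`. -/
noncomputable def Uxphase (N : ℕ) (m n : ZMod N) : ℂ :=
  if m.val = N - 1 then Complex.exp (-(2 * Real.pi * Complex.I * n.val / N)) else 1

/-- The unitary `U` with `U|m,n⟩ = U_x(m,n)|m+1,n⟩`. -/
noncomputable def Umat (N : ℕ) : Matrix (ZMod N × ZMod N) (ZMod N × ZMod N) ℂ :=
  Matrix.of fun p q => if p = (q.1 + 1, q.2) then Uxphase N q.1 q.2 else 0

/-- The unitary `V` with `V|m,n⟩ = e^{2πi m/N²}|m,n+1⟩`. -/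
noncomputable def Vmat (N : ℕ) : Matrix (ZMod N × ZMod N) (ZMod N × ZMod N) ℂ :=
  Matrix.of fun p q =>
    if p = (q.1, q.2 + 1) then Complex.exp (2 * Real.pi * Complex.I * q.1.val / (N ^ 2)) else 0

lemma mulVec_Umat (N : ℕ) [NeZero N] (v : ZMod N × ZMod N → ℂ) (p : ZMod N × ZMod N) :
    (Umat N).mulVec v p = Uxphase N (p.1 - 1) p.2 * v (p.1 - 1, p.2) := by
  classical
  unfold Matrix.mulVec Umat dotProduct
  rw [Finset.sum_eq_single ((p.1 - 1, p.2))]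
  · simp [sub_add_cancel]
  · intro q _ hq
    have : p ≠ (q.1 + 1, q.2) := by
      intro h
      apply hq
      rw [Prod.ext_iff] at h ⊢
      constructor
      · simp [h.1, add_sub_cancel_right]
      · simpa using h.2.symm
    simp [this]
  · simp

lemma mulVec_Vmat (N : ℕ) [NeZero N] (v : ZMod N × ZMod N → ℂ) (p : ZMod N × ZMod N) :
    (Vmat N).mulVec v p
      = Complex.exp (2 * Real.pi * Complex.I * p.1.val / (N ^ 2)) * v (p.1, p.2 - 1) := by
  classical
  unfold Matrix.mulVec Vmat dotProduct
  rw [Finset.sum_eq_single ((p.1, p.2 - 1))]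
  · simp [sub_add_cancel]
  · intro q _ hq
    have : p ≠ (q.1, q.2 + 1) := by
      intro h
      apply hq
      rw [Prod.ext_iff] at h ⊢
      constructor
      · simpa using h.1.symm
      · simp [h.2, add_sub_cancel_right]
    simp [this]
  · simp

lemma Uxphase_ne_zero (N : ℕ) (m n : ZMod N) : Uxphase N m n ≠ 0 := by
  unfold Uxphase
  split
  · exact Complex.exp_ne_zero _
  · exact one_ne_zero

lemma exp_neg_aux (N : ℕ) [NeZero N] (k : ℕ) :
    Complex.exp (-(2 * Real.pi * Complex.I * k / N)) ^ N = 1 := by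
  rw [← Complex.exp_nat_mul]
  have hN : (N : ℂ) ≠ 0 := Nat.cast_ne_zero.mpr (NeZero.ne N)
  have : (N : ℂ) * -(2 * Real.pi * Complex.I * k / N) = (-(k : ℤ)) * (2 * Real.pi * Complex.I) := by
    field_simp
    simp
  rw [this]
  simpa using Complex.exp_int_mul_two_pi_mul_I (-(k : ℤ))

lemma Uroot (N : ℕ) [NeZero N] (z : ℂ) (v : ZMod N × ZMod N → ℂ)
    (hv : (Umat N).mulVec v = z • v) (h0 : v ≠ 0) : z ^ (N ^ 2) = 1 := by
  have rel : ∀ m n : ZMod N, Uxphase N m n * v (m, n) = z * v (m + 1, n) := by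
    intro m n
    have := congrFun hv (m + 1, n)
    rw [mulVec_Umat] at this
    simpa [add_sub_cancel_right] using this
  have hz : z ≠ 0 := by
    rintro rfl
    apply h0
    funext p
    have := rel p.1 p.2
    rw [zero_mul] at this
    have := (mul_eq_zero.mp this).resolve_left (Uxphase_ne_zero N p.1 p.2)
    simpa using this
  obtain ⟨p₀, hp₀⟩ : ∃ p, v p ≠ 0 := by
    by_contra h
    push_neg at h
    exact h0 (funext h)
  set n := p₀.2 with hn
  have hstep : ∀ m : ZMod N, v (m, n) ≠ 0 → v (m + 1, n) ≠ 0 := by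
    intro m hm h
    have := rel m n
    rw [h, mul_zero] at this
    exact (mul_eq_zero.mp this).elim (Uxphase_ne_zero N m n) hm
  have hall : ∀ k : ℕ, v (p₀.1 + (k : ZMod N), n) ≠ 0 := by
    intro k
    induction k with
    | zero => simpa [hn] using hp₀
    | succ k ih =>
      have := hstep _ ih
      rwa [add_assoc, show ((k : ZMod N) + 1) = ((k + 1 : ℕ) : ZMod N) by push_cast; ring] at this
  have h00 : v (0, n) ≠ 0 := by
    have := hall (-p₀.1).val
    rwa [ZMod.natCast_val, ZMod.cast_id, add_neg_cancel] at this
  have hQ : ∀ k : ℕ, k ≤ N - 1 → z ^ k * v ((k : ZMod N), n) = v (0, n) := by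
    intro k
    induction k with
    | zero => simp
    | succ k ih =>
      intro hk
      have hk' : k ≤ N - 1 := Nat.le_of_succ_le hk
      have hkN : k < N := by omega
      have hux : Uxphase N ((k : ℕ) : ZMod N) n = 1 := by
        unfold Uxphase
        rw [ZMod.val_cast_of_lt hkN]
        have : k ≠ N - 1 := by omega
        simp [this]
      have hr := rel ((k : ℕ) : ZMod N) n
      rw [hux, one_mul] at hr
      calc z ^ (k + 1) * v (((k + 1 : ℕ) : ZMod N), n)
          = z ^ k * (z * v (((k : ZMod N) + 1), n)) := by push_cast; ring_nf
        _ = z ^ k * v ((k : ZMod N), n) := by rw [← hr]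
        _ = v (0, n) := ih hk'
  have hNpos : 0 < N := Nat.pos_of_ne_zero (NeZero.ne N)
  have hcast : (((N - 1 : ℕ) : ZMod N) + 1) = (0 : ZMod N) := by
    have : (((N - 1 : ℕ) : ZMod N) + 1) = ((N - 1 + 1 : ℕ) : ZMod N) := by push_cast; ring
    rw [this, Nat.sub_add_cancel hNpos, ZMod.natCast_self]
  have hval : (((N - 1 : ℕ) : ZMod N)).val = N - 1 := ZMod.val_cast_of_lt (by omega)
  have hfin : z ^ N * v (0, n) = Uxphase N ((N - 1 : ℕ) : ZMod N) n * v (0, n) := by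
    have hr := rel ((N - 1 : ℕ) : ZMod N) n
    rw [hcast] at hr
    calc z ^ N * v (0, n) = z ^ (N - 1) * (z * v (0, n)) := by
          rw [← mul_assoc, ← pow_succ, Nat.sub_add_cancel hNpos]
      _ = z ^ (N - 1) * (Uxphase N ((N - 1 : ℕ) : ZMod N) n * v (((N - 1 : ℕ) : ZMod N), n)) := by
          rw [hr]
      _ = Uxphase N ((N - 1 : ℕ) : ZMod N) n * (z ^ (N - 1) * v (((N - 1 : ℕ) : ZMod N), n)) := by
          ring
      _ = Uxphase N ((N - 1 : ℕ) : ZMod N) n * v (0, n) := by rw [hQ (N - 1) le_rfl]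
  have hzN : z ^ N = Complex.exp (-(2 * Real.pi * Complex.I * n.val / N)) := by
    have := mul_right_cancel₀ h00 hfin
    rwa [Uxphase, hval, if_pos rfl] at this
  rw [pow_two, pow_mul, hzN, exp_neg_aux]

lemma Uex (N : ℕ) [NeZero N] (z : ℂ) (hz : z ^ (N ^ 2) = 1) :
    ∃ v : ZMod N × ZMod N → ℂ, v ≠ 0 ∧ (Umat N).mulVec v = z • v := by
  have hNpos : 0 < N := Nat.pos_of_ne_zero (NeZero.ne N)
  have hN : (N : ℂ) ≠ 0 := Nat.cast_ne_zero.mpr (NeZero.ne N)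
  have hz0 : z ≠ 0 := by
    rintro rfl
    rw [zero_pow (by positivity)] at hz
    exact zero_ne_one hz
  have hNN : (z ^ N) ^ N = 1 := by rw [← pow_mul, ← pow_two]; exact hz
  obtain ⟨i, hiN, hzi⟩ := (Complex.isPrimitiveRoot_exp N (NeZero.ne N)).eq_pow_of_pow_eq_one hNN
  have he : z ^ N = Complex.exp (2 * Real.pi * Complex.I * i / N) := by
    rw [← hzi, ← Complex.exp_nat_mul]
    congr 1
    ring
  set n : ZMod N := -(i : ZMod N) with hndef
  have hdvd : N ∣ n.val + i := by
    have : ((n.val + i : ℕ) : ZMod N) = 0 := by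
      push_cast
      rw [ZMod.natCast_val, ZMod.cast_id, hndef]
      ring
    exact (ZMod.natCast_eq_zero_iff _ _).mp this
  obtain ⟨t, ht⟩ := hdvd
  have hc : (n.val : ℂ) + i = N * t := by exact_mod_cast congrArg (Nat.cast : ℕ → ℂ) ht
  have key : Complex.exp (-(2 * Real.pi * Complex.I * n.val / N)) = z ^ N := by
    rw [he, Complex.exp_eq_exp_iff_exists_int]
    refine ⟨-(t : ℤ), ?_⟩
    have h2 : ((-(t : ℤ) : ℤ) : ℂ) = -(t : ℂ) := by push_cast; ring
    rw [h2]
    generalize n.val = a at hc ⊢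
    field_simp
    linear_combination (-1 : ℂ) * hc
  refine ⟨fun p => if p.2 = n then (z⁻¹) ^ p.1.val else 0, ?_, ?_⟩
  · intro h
    have := congrFun h (0, n)
    simp [ZMod.val_zero] at this
  · funext p
    rw [mulVec_Umat, Pi.smul_apply, smul_eq_mul]
    by_cases hp : p.2 = n
    · simp only [hp, if_pos rfl]
      by_cases hm : p.1 = 0
      · have hneg : (p.1 - 1 : ZMod N) = ((N - 1 : ℕ) : ZMod N) := by
          rw [hm, Nat.cast_sub hNpos, ZMod.natCast_self, Nat.cast_one]
        have hval : ((p.1 - 1 : ZMod N)).val = N - 1 := by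
          rw [hneg, ZMod.val_cast_of_lt (by omega)]
        simp only [eq_self_iff_true, if_true]
        rw [Uxphase, hval, if_pos rfl, key, hm, ZMod.val_zero, pow_zero, mul_one]
        have harr : z ^ N * z⁻¹ ^ (N - 1) = z := by
          have h3 : z ^ N = z ^ (N - 1) * z := by rw [← pow_succ, Nat.sub_add_cancel hNpos]
          rw [inv_pow, h3, mul_comm (z ^ (N - 1)) z, mul_assoc,
            mul_inv_cancel₀ (pow_ne_zero _ hz0), mul_one]
        exact harr
      · have hv0 : p.1.val ≠ 0 := by rwa [Ne, ZMod.val_eq_zero]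
        have hvlt : p.1.val < N := ZMod.val_lt p.1
        have hsub : p.1 - 1 = ((p.1.val - 1 : ℕ) : ZMod N) := by
          conv_lhs => rw [show p.1 = ((p.1.val : ℕ) : ZMod N) by
            rw [ZMod.natCast_val, ZMod.cast_id]]
          rw [Nat.cast_sub (by omega), Nat.cast_one]
        have hsv : (p.1 - 1).val = p.1.val - 1 := by
          rw [hsub, ZMod.val_cast_of_lt (by omega)]
        simp only [eq_self_iff_true, if_true]
        rw [Uxphase, hsv, if_neg (by omega), one_mul]
        have harr2 : z * z⁻¹ ^ p.1.val = z⁻¹ ^ (p.1.val - 1) := by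
          conv_lhs => rw [show p.1.val = (p.1.val - 1) + 1 by omega]
          rw [pow_succ, mul_comm z, mul_assoc, inv_mul_cancel₀ hz0, mul_one]
        rw [harr2]
    · simp [hp]

lemma exp_pos_aux (N : ℕ) [NeZero N] (k : ℕ) :
    Complex.exp (2 * Real.pi * Complex.I * k / ((N : ℂ) ^ 2)) ^ (N ^ 2) = 1 := by
  rw [← Complex.exp_nat_mul]
  have hN : (N : ℂ) ≠ 0 := Nat.cast_ne_zero.mpr (NeZero.ne N)
  have h1 : ((N ^ 2 : ℕ) : ℂ) * (2 * Real.pi * Complex.I * k / ((N : ℂ) ^ 2))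
      = ((k : ℤ) : ℂ) * (2 * Real.pi * Complex.I) := by
    push_cast
    field_simp
  rw [h1, Complex.exp_int_mul_two_pi_mul_I]

lemma Vroot (N : ℕ) [NeZero N] (z : ℂ) (v : ZMod N × ZMod N → ℂ)
    (hv : (Vmat N).mulVec v = z • v) (h0 : v ≠ 0) : z ^ (N ^ 2) = 1 := by
  have rel : ∀ m k : ZMod N,
      Complex.exp (2 * Real.pi * Complex.I * m.val / ((N : ℂ) ^ 2)) * v (m, k)
        = z * v (m, k + 1) := by
    intro m k
    have := congrFun hv (m, k + 1)
    rw [mulVec_Vmat] at this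
    simpa [add_sub_cancel_right] using this
  have hz : z ≠ 0 := by
    rintro rfl
    apply h0
    funext p
    have := rel p.1 p.2
    rw [zero_mul] at this
    have := (mul_eq_zero.mp this).resolve_left (Complex.exp_ne_zero _)
    simpa using this
  obtain ⟨p₀, hp₀⟩ : ∃ p, v p ≠ 0 := by
    by_contra h
    push_neg at h
    exact h0 (funext h)
  set m := p₀.1 with hm
  set e := Complex.exp (2 * Real.pi * Complex.I * m.val / ((N : ℂ) ^ 2)) with hedef
  have he0 : e ≠ 0 := Complex.exp_ne_zero _
  have hstep : ∀ k : ZMod N, v (m, k) ≠ 0 → v (m, k + 1) ≠ 0 := by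
    intro k hk h
    have := rel m k
    rw [h, mul_zero] at this
    exact (mul_eq_zero.mp this).elim he0 hk
  have hall : ∀ k : ℕ, v (m, p₀.2 + (k : ZMod N)) ≠ 0 := by
    intro k
    induction k with
    | zero => simpa [hm] using hp₀
    | succ k ih =>
      have := hstep _ ih
      rwa [add_assoc, show ((k : ZMod N) + 1) = ((k + 1 : ℕ) : ZMod N) by push_cast; ring] at this
  have h00 : v (m, 0) ≠ 0 := by
    have := hall (-p₀.2).val
    rwa [ZMod.natCast_val, ZMod.cast_id, add_neg_cancel] at this
  have hQ : ∀ k : ℕ, z ^ k * v (m, (k : ZMod N)) = e ^ k * v (m, 0) := by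
    intro k
    induction k with
    | zero => simp
    | succ k ih =>
      have hr := rel m ((k : ℕ) : ZMod N)
      calc z ^ (k + 1) * v (m, ((k + 1 : ℕ) : ZMod N))
          = z ^ k * (z * v (m, ((k : ZMod N) + 1))) := by push_cast; ring_nf
        _ = z ^ k * (e * v (m, (k : ZMod N))) := by rw [← hr]
        _ = e * (z ^ k * v (m, (k : ZMod N))) := by ring
        _ = e * (e ^ k * v (m, 0)) := by rw [ih]
        _ = e ^ (k + 1) * v (m, 0) := by ring
  have hNfin := hQ N
  rw [ZMod.natCast_self] at hNfin
  have hzN : z ^ N = e ^ N := mul_right_cancel₀ h00 hNfin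
  rw [pow_two, pow_mul, hzN, ← pow_mul, ← pow_two, hedef, exp_pos_aux]

lemma Vex (N : ℕ) [NeZero N] (z : ℂ) (hz : z ^ (N ^ 2) = 1) :
    ∃ v : ZMod N × ZMod N → ℂ, v ≠ 0 ∧ (Vmat N).mulVec v = z • v := by
  have hNpos : 0 < N := Nat.pos_of_ne_zero (NeZero.ne N)
  have hN : (N : ℂ) ≠ 0 := Nat.cast_ne_zero.mpr (NeZero.ne N)
  have hz0 : z ≠ 0 := by
    rintro rfl
    rw [zero_pow (by positivity)] at hz
    exact zero_ne_one hz
  have hNN : (z ^ N) ^ N = 1 := by rw [← pow_mul, ← pow_two]; exact hz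
  obtain ⟨i, hiN, hzi⟩ := (Complex.isPrimitiveRoot_exp N (NeZero.ne N)).eq_pow_of_pow_eq_one hNN
  have he : z ^ N = Complex.exp (2 * Real.pi * Complex.I * i / N) := by
    rw [← hzi, ← Complex.exp_nat_mul]
    congr 1
    ring
  set m : ZMod N := (i : ZMod N) with hmdef
  have hmval : m.val = i := ZMod.val_cast_of_lt hiN
  set e := Complex.exp (2 * Real.pi * Complex.I * m.val / ((N : ℂ) ^ 2)) with hedef
  have he0 : e ≠ 0 := Complex.exp_ne_zero _
  have hepow : e ^ N = z ^ N := by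
    rw [he, hedef, hmval, ← Complex.exp_nat_mul]
    congr 1
    field_simp
  set w := e / z with hwdef
  have hzw : z * w = e := by
    rw [hwdef, mul_div_assoc']
    rw [mul_comm, mul_div_assoc, div_self hz0, mul_one]
  have hwpow : w ^ N = 1 := by
    rw [hwdef, div_pow, hepow, div_self (pow_ne_zero _ hz0)]
  refine ⟨fun p => if p.1 = m then w ^ p.2.val else 0, ?_, ?_⟩
  · intro h
    have := congrFun h (m, 0)
    simp [ZMod.val_zero] at this
  · funext p
    rw [mulVec_Vmat, Pi.smul_apply, smul_eq_mul]
    by_cases hp : p.1 = m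
    · simp only [hp, eq_self_iff_true, if_true]
      by_cases hk : p.2 = 0
      · have hneg : (p.2 - 1 : ZMod N) = ((N - 1 : ℕ) : ZMod N) := by
          rw [hk, Nat.cast_sub hNpos, ZMod.natCast_self, Nat.cast_one]
        have hval : ((p.2 - 1 : ZMod N)).val = N - 1 := by
          rw [hneg, ZMod.val_cast_of_lt (by omega)]
        rw [hval, hk, ZMod.val_zero, pow_zero, mul_one, ← hedef, ← hzw,
          mul_assoc, ← pow_succ', Nat.sub_add_cancel hNpos, hwpow, mul_one]
      · have hv0 : p.2.val ≠ 0 := by rwa [Ne, ZMod.val_eq_zero]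
        have hsub : p.2 - 1 = ((p.2.val - 1 : ℕ) : ZMod N) := by
          conv_lhs => rw [show p.2 = ((p.2.val : ℕ) : ZMod N) by
            rw [ZMod.natCast_val, ZMod.cast_id]]
          rw [Nat.cast_sub (by omega), Nat.cast_one]
        have hvlt : p.2.val < N := ZMod.val_lt p.2
        have hsv : (p.2 - 1).val = p.2.val - 1 := by
          rw [hsub, ZMod.val_cast_of_lt (by omega)]
        rw [hsv, ← hedef, ← hzw]
        conv_rhs => rw [show p.2.val = (p.2.val - 1) + 1 by omega]
        rw [pow_succ]
        ring
    · simp [hp]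

open Module Submodule

lemma auxSumFinrankLe {K V : Type*} [Field K] [AddCommGroup V] [Module K V]
    [FiniteDimensional K V] {ι : Type*} [DecidableEq ι] (f : ι → Submodule K V)
    (hf : iSupIndep f) (s : Finset ι) :
    ∑ i ∈ s, Module.finrank K (f i) ≤ Module.finrank K V := by
  have key : ∀ s : Finset ι, ∑ i ∈ s, Module.finrank K (f i)
      = Module.finrank K (s.sup f : Submodule K V) := by
    intro s
    induction s using Finset.induction_on with
    | empty => rw [Finset.sum_empty, Finset.sup_empty, finrank_bot]
    | @insert a s ha ih =>

      have hdis : Disjoint (f a) (s.sup f) := by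
        refine (hf a).mono_right (Finset.sup_le fun b hb => ?_)
        exact le_iSup₂ (f := fun j (_ : j ≠ a) => f j) b (fun h => ha (h ▸ hb))
      rw [Finset.sum_insert ha, ih, Finset.sup_insert,
        ← Submodule.finrank_sup_add_finrank_inf_eq, hdis.eq_bot, finrank_bot, add_zero]
  rw [key]
  exact Submodule.finrank_le _

lemma auxSpec {ι : Type*} [Fintype ι] [DecidableEq ι] (A : Matrix ι ι ℂ) (K : ℕ)
    (hK : 0 < K) (hcard : Fintype.card ι = K)
    (hroot : ∀ z : ℂ, ∀ v : ι → ℂ, A.mulVec v = z • v → v ≠ 0 → z ^ K = 1)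
    (hex : ∀ z : ℂ, z ^ K = 1 → ∃ v : ι → ℂ, v ≠ 0 ∧ A.mulVec v = z • v) :
    spectrum ℂ A = {z : ℂ | z ^ K = 1} ∧
      ∀ z : ℂ, z ^ K = 1 → Module.finrank ℂ (Module.End.eigenspace A.mulVecLin z) = 1 := by
  have hML : (Matrix.toLinAlgEquiv' A : (ι → ℂ) →ₗ[ℂ] (ι → ℂ)) = A.mulVecLin := by
    ext v
    simp [Matrix.toLinAlgEquiv'_apply]
  have hspec : spectrum ℂ A = spectrum ℂ A.mulVecLin := by
    rw [← AlgEquiv.spectrum_eq (Matrix.toLinAlgEquiv') A, hML]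
  have heig : ∀ z : ℂ, Module.End.HasEigenvalue A.mulVecLin z ↔ z ^ K = 1 := by
    intro z
    constructor
    · intro h
      obtain ⟨v, hv, h0⟩ := h.exists_hasEigenvector
      exact hroot z v
        (by rw [← Matrix.mulVecLin_apply]; exact Module.End.mem_eigenspace_iff.mp hv) h0
    · intro h
      obtain ⟨v, h0, hv⟩ := hex z h
      exact Module.End.hasEigenvalue_of_hasEigenvector
        ⟨Module.End.mem_eigenspace_iff.mpr (by rwa [Matrix.mulVecLin_apply]), h0⟩
  constructor
  · ext z
    rw [hspec, ← Module.End.hasEigenvalue_iff_mem_spectrum]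
    exact heig z
  · intro z hz
    set S := Polynomial.nthRootsFinset K (1 : ℂ) with hS
    have hcardS : S.card = K := (Complex.isPrimitiveRoot_exp K hK.ne').card_nthRootsFinset
    have hge : ∀ w ∈ S, 1 ≤ Module.finrank ℂ (Module.End.eigenspace A.mulVecLin w) := by
      intro w hw
      have hw1 : w ^ K = 1 := (Polynomial.mem_nthRootsFinset hK (1 : ℂ)).mp hw
      have : Module.End.eigenspace A.mulVecLin w ≠ ⊥ := (heig w).mpr hw1
      have := Submodule.nontrivial_iff_ne_bot.mpr this
      exact Module.finrank_pos_iff.mpr this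
    have hsum : ∑ w ∈ S, Module.finrank ℂ (Module.End.eigenspace A.mulVecLin w)
        ≤ K := by
      have := auxSumFinrankLe (K := ℂ) (V := ι → ℂ)
        (Module.End.eigenspace A.mulVecLin) (Module.End.eigenspaces_iSupIndep _) S
      rwa [Module.finrank_pi, hcard] at this
    have heq : ∀ w ∈ S, Module.finrank ℂ (Module.End.eigenspace A.mulVecLin w) = 1 := by
      have h1 : ∑ w ∈ S, 1 ≤ ∑ w ∈ S, Module.finrank ℂ (Module.End.eigenspace A.mulVecLin w) :=
        Finset.sum_le_sum hge
      have h2 : ∑ w ∈ S, (1 : ℕ) = K := by simp [hcardS]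
      have h3 : ∑ w ∈ S, (1:ℕ) = ∑ w ∈ S, Module.finrank ℂ (Module.End.eigenspace A.mulVecLin w) :=
        le_antisymm h1 (by omega)
      intro w hw
      exact ((Finset.sum_eq_sum_iff_of_le hge).mp h3 w hw).symm
    exact heq z ((Polynomial.mem_nthRootsFinset hK (1 : ℂ)).mpr hz)

theorem stmt14 (N : ℕ) [NeZero N] :
    (spectrum ℂ (Umat N) = {z : ℂ | z ^ (N ^ 2) = 1} ∧
      ∀ z : ℂ, z ^ (N ^ 2) = 1 →
        Module.finrank ℂ (Module.End.eigenspace (Matrix.mulVecLin (Umat N)) z) = 1) ∧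
    (spectrum ℂ (Vmat N) = {z : ℂ | z ^ (N ^ 2) = 1} ∧
      ∀ z : ℂ, z ^ (N ^ 2) = 1 →
        Module.finrank ℂ (Module.End.eigenspace (Matrix.mulVecLin (Vmat N)) z) = 1) := by
  have hK : 0 < N ^ 2 := by have := Nat.pos_of_ne_zero (NeZero.ne N); positivity
  have hcard : Fintype.card (ZMod N × ZMod N) = N ^ 2 := by
    rw [Fintype.card_prod, ZMod.card, pow_two]
  exact ⟨auxSpec (Umat N) (N ^ 2) hK hcard (Uroot N) (Uex N),
    auxSpec (Vmat N) (N ^ 2) hK hcard (Vroot N) (Vex N)⟩
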